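/- For every natural number k ≥ 1 and every natural number i ≥ ⌊log₂ k⌋ + 1, the value 2^k occurs exactly 2^{i-1-⌊log₂ k⌋} times as an entry of the list R_i; moreover, the value 1 (= 2^0) occurs exactly 2^i times in R_i for every i ≥ 0. -/

import Mathlib

def phi (i : ℕ) : List ℕ :=
  (List.range (2 ^ (i - 1))).map (fun j => 2 ^ (2 ^ (i - 1) + j))

def R : ℕ → List ℕ
  | 0 => [1]
  | i + 1 => R i ++ R i ++ phi (i + 1)

lemma phi_nodup (i : ℕ) : (phi i).Nodup := by
  unfold phi
  refine (List.nodup_range).map ?_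
  intro a b h
  have := Nat.pow_right_injective (le_refl 2) h
  omega

lemma mem_phi (i k : ℕ) :
    2 ^ k ∈ phi i ↔ 2 ^ (i - 1) ≤ k ∧ k < 2 ^ (i - 1) + 2 ^ (i - 1) := by
  unfold phi
  simp only [List.mem_map, List.mem_range]
  constructor
  · rintro ⟨j, hj, h⟩
    have := Nat.pow_right_injective (le_refl 2) h
    omega
  · rintro ⟨h1, h2⟩
    exact ⟨k - 2 ^ (i - 1), by omega, by congr 1; omega⟩

lemma count_R_zero (i k : ℕ) (hk1 : 1 ≤ k) (hk : 2 ^ i ≤ k) :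
    (R i).count (2 ^ k) = 0 := by
  induction i with
  | zero =>
    have : (2 : ℕ) ^ k ≠ 1 := by
      have : 2 ^ 1 ≤ 2 ^ k := Nat.pow_le_pow_right (by norm_num) hk1
      omega
    simp [R, List.count_cons, this, this.symm]
  | succ i ih =>
    have h2 : 2 ^ i ≤ k := le_trans (Nat.pow_le_pow_right (by norm_num) (by omega)) hk
    have hphi : (phi (i + 1)).count (2 ^ k) = 0 := by
      apply List.count_eq_zero_of_not_mem
      rw [mem_phi]
      have : 2 ^ i + 2 ^ i = 2 ^ (i + 1) := by ring
      simp only [Nat.add_sub_cancel]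
      omega
    rw [R, List.count_append, List.count_append, ih h2, hphi]

lemma count_R_one (i : ℕ) : (R i).count 1 = 2 ^ i := by
  induction i with
  | zero => simp [R]
  | succ i ih =>
    have hphi : (phi (i + 1)).count 1 = 0 := by
      apply List.count_eq_zero_of_not_mem
      have h := (mem_phi (i + 1) 0)
      simp only [pow_zero] at h
      rw [h]
      have : 0 < 2 ^ i := Nat.pow_pos (by norm_num)
      simp only [Nat.add_sub_cancel]
      omega
    rw [R, List.count_append, List.count_append, ih, hphi, pow_succ]
    ring

theorem R_count_powers :
    (∀ k : ℕ, 1 ≤ k → ∀ i : ℕ, Nat.log 2 k + 1 ≤ i →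
      (R i).count (2 ^ k) = 2 ^ (i - 1 - Nat.log 2 k)) ∧
    (∀ i : ℕ, (R i).count 1 = 2 ^ i) := by
  refine ⟨?_, count_R_one⟩
  intro k hk i
  induction i with
  | zero => omega
  | succ i ih =>
    intro hi
    set L := Nat.log 2 k with hLdef
    have hL1 : 2 ^ L ≤ k := Nat.pow_log_le_self 2 (by omega)
    have hL2 : k < 2 ^ (L + 1) := Nat.lt_pow_succ_log_self (by norm_num) k
    by_cases hcase : L + 1 ≤ i
    · have hphi : (phi (i + 1)).count (2 ^ k) = 0 := by
        apply List.count_eq_zero_of_not_mem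
        rw [mem_phi]
        have h21 : 2 ^ (L + 1) ≤ 2 ^ i := Nat.pow_le_pow_right (by norm_num) hcase
        simp only [Nat.add_sub_cancel]
        omega
      rw [R, List.count_append, List.count_append, ih hcase, hphi]
      have he : i + 1 - 1 - L = (i - 1 - L) + 1 := by omega
      rw [he, pow_succ]
      ring
    · have hiL : i = L := by omega
      have h0 : (R i).count (2 ^ k) = 0 := count_R_zero i k hk (hiL ▸ hL1)
      have hphi : (phi (i + 1)).count (2 ^ k) = 1 := by
        apply List.count_eq_one_of_mem (phi_nodup _)
        rw [mem_phi]
        simp only [Nat.add_sub_cancel, hiL]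
        omega
      rw [R, List.count_append, List.count_append, h0, hphi]
      have he : i + 1 - 1 - L = 0 := by omega
      rw [he]
      simp
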